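/- Let p, γ > 0, η > 1 and β < pγ. Then ∫_0^∞ v^{pγ-β-1} ∫_1^η θ^{pγ-β-1} e^{-v^p θ^p} ∫_{1/θ}^1 (1-u^p)^{γ-1} u^{-1-β} du dθ dv = p^{-1} Γ(γ - β/p) C*_{β,γ,p,η}. Consequently, the incomplete beta gamma mixture density f♯_{β,γ,p,η} integrates to 1 over (0, ∞), and f♯_{β,γ,p,η}(v) = ∫_1^η g_{pγ-β,p,θ^p}(v) m♯_{β,γ,p,η}(θ) dθ for all v > 0. -/

import Mathlib

open MeasureTheory Set

/-- The generalized gamma density `g_{γ,p,θ}(u) = (p θ^(γ/p) / Γ(γ/p)) u^(γ-1) e^(-u^p θ)`. -/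
noncomputable def gg (γ p θ u : ℝ) : ℝ :=
  p * θ ^ (γ / p) / Real.Gamma (γ / p) * u ^ (γ - 1) * Real.exp (-(u ^ p * θ))

/-- `C*_{β,γ,p,η} = ∫_1^η θ⁻¹ ∫_{1/θ}^1 (1-u^p)^(γ-1) u^(-1-β) du dθ`. -/
noncomputable def Cstar (β γ p η : ℝ) : ℝ :=
  ∫ θ in (1:ℝ)..η, θ⁻¹ * ∫ u in (1/θ)..(1:ℝ), (1 - u ^ p) ^ (γ - 1) * u ^ (-1 - β)

/-- `C_{β,γ,p,η} = p⁻¹ Γ(γ-β/p) C*_{β,γ,p,η}`. -/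
noncomputable def Cc (β γ p η : ℝ) : ℝ :=
  p⁻¹ * Real.Gamma (γ - β/p) * Cstar β γ p η

/-- The incomplete beta gamma mixture (IBGM) density `f♯_{β,γ,p,η}(v)` for `v > 0`. -/
noncomputable def fibgm (β γ p η v : ℝ) : ℝ :=
  (Cc β γ p η)⁻¹ * v ^ (p * γ - β - 1) *
    ∫ θ in (1:ℝ)..η, θ ^ (p * γ - β - 1) * Real.exp (-(v ^ p * θ ^ p)) *
      ∫ u in (1/θ)..(1:ℝ), (1 - u ^ p) ^ (γ - 1) * u ^ (-1 - β)

/-- The mixing density `m♯_{β,γ,p,η}(θ)` for `1 < θ < η`. -/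
noncomputable def msharp (β γ p η θ : ℝ) : ℝ :=
  (Cstar β γ p η)⁻¹ * θ⁻¹ * ∫ u in (1/θ)..(1:ℝ), (1 - u ^ p) ^ (γ - 1) * u ^ (-1 - β)

/-- Comparison: lower bound `m (1-u) ≤ 1 - u^p` on `[c,1]` when `m ≤ p u^(p-1)` there. -/
lemma aux_lb {p c m : ℝ} (hc : 0 < c) (hc1 : c ≤ 1)
    (hm : ∀ u ∈ Set.Ioo c 1, m ≤ p * u ^ (p - 1)) :
    ∀ u ∈ Set.Icc c 1, m * (1 - u) ≤ 1 - u ^ p := by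
  set φ : ℝ → ℝ := fun u => 1 - u ^ p - m * (1 - u) with hφ
  have hder : ∀ u ∈ Set.Ioo c 1, HasDerivAt φ (m - p * u ^ (p - 1)) u := by
    intro u hu
    have hu0 : u ≠ 0 := ne_of_gt (hc.trans hu.1)
    have h1 : HasDerivAt (fun x : ℝ => x ^ p) (p * u ^ (p - 1)) u := by
      simpa [mul_comm] using Real.hasDerivAt_rpow_const (p := p) (Or.inl hu0)
    have h2 : HasDerivAt (fun x : ℝ => 1 - x ^ p) (-(p * u ^ (p - 1))) u := by
      have := (hasDerivAt_const u (1:ℝ)).sub h1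
      rw [zero_sub] at this
      exact this
    have h3 : HasDerivAt (fun x : ℝ => m * (1 - x)) (m * (0 - 1)) u :=
      ((hasDerivAt_const u (1:ℝ)).sub (hasDerivAt_id u)).const_mul m
    have := h2.sub h3
    exact this.congr_deriv (by ring)
  have hcont : ContinuousOn φ (Set.Icc c 1) := by
    apply ContinuousOn.sub
    · apply ContinuousOn.sub continuousOn_const
      exact ContinuousOn.rpow_const continuousOn_id
        (fun x hx => Or.inl (ne_of_gt (lt_of_lt_of_le hc hx.1)))
    · fun_prop
  have hanti : AntitoneOn φ (Set.Icc c 1) := by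
    apply antitoneOn_of_deriv_nonpos (convex_Icc c 1) hcont
    · intro u hu
      rw [interior_Icc] at hu
      exact (hder u hu).differentiableAt.differentiableWithinAt
    · intro u hu
      rw [interior_Icc] at hu
      rw [(hder u hu).deriv]
      have := hm u hu
      linarith
  intro u hu
  have h1 : φ 1 ≤ φ u := hanti hu (Set.right_mem_Icc.mpr hc1) hu.2
  have h2 : φ 1 = 0 := by simp [hφ, Real.one_rpow]
  have := h1
  rw [h2] at this
  simp only [hφ] at this
  linarith

/-- Comparison: upper bound `1 - u^p ≤ m (1-u)` on `[c,1]` when `p u^(p-1) ≤ m` there. -/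
lemma aux_ub {p c m : ℝ} (hc : 0 < c) (hc1 : c ≤ 1)
    (hm : ∀ u ∈ Set.Ioo c 1, p * u ^ (p - 1) ≤ m) :
    ∀ u ∈ Set.Icc c 1, 1 - u ^ p ≤ m * (1 - u) := by
  set φ : ℝ → ℝ := fun u => m * (1 - u) - (1 - u ^ p) with hφ
  have hder : ∀ u ∈ Set.Ioo c 1, HasDerivAt φ (p * u ^ (p - 1) - m) u := by
    intro u hu
    have hu0 : u ≠ 0 := ne_of_gt (hc.trans hu.1)
    have h1 : HasDerivAt (fun x : ℝ => x ^ p) (p * u ^ (p - 1)) u := by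
      simpa [mul_comm] using Real.hasDerivAt_rpow_const (p := p) (Or.inl hu0)
    have h2 : HasDerivAt (fun x : ℝ => 1 - x ^ p) (-(p * u ^ (p - 1))) u := by
      have := (hasDerivAt_const u (1:ℝ)).sub h1
      rw [zero_sub] at this
      exact this
    have h3 : HasDerivAt (fun x : ℝ => m * (1 - x)) (m * (0 - 1)) u :=
      ((hasDerivAt_const u (1:ℝ)).sub (hasDerivAt_id u)).const_mul m
    have := h3.sub h2
    exact this.congr_deriv (by ring)
  have hcont : ContinuousOn φ (Set.Icc c 1) := by
    apply ContinuousOn.sub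
    · fun_prop
    · apply ContinuousOn.sub continuousOn_const
      exact ContinuousOn.rpow_const continuousOn_id
        (fun x hx => Or.inl (ne_of_gt (lt_of_lt_of_le hc hx.1)))
  have hanti : AntitoneOn φ (Set.Icc c 1) := by
    apply antitoneOn_of_deriv_nonpos (convex_Icc c 1) hcont
    · intro u hu
      rw [interior_Icc] at hu
      exact (hder u hu).differentiableAt.differentiableWithinAt
    · intro u hu
      rw [interior_Icc] at hu
      rw [(hder u hu).deriv]
      have := hm u hu
      linarith
  intro u hu
  have h1 : φ 1 ≤ φ u := hanti hu (Set.right_mem_Icc.mpr hc1) hu.2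
  have h2 : φ 1 = 0 := by simp [hφ, Real.one_rpow]
  have := h1
  rw [h2] at this
  simp only [hφ] at this
  linarith

/-- Integrability of `(1 - u^p)^(γ-1)` on `[c,1]`, `0 < c ≤ 1`. -/
lemma aux_int1 {p γ c : ℝ} (hp : 0 < p) (hγ : 0 < γ) (hc : 0 < c) (hc1 : c ≤ 1) :
    IntervalIntegrable (fun u : ℝ => (1 - u ^ p) ^ (γ - 1)) volume c 1 := by
  obtain ⟨k, hk0, hbound⟩ : ∃ k : ℝ, 0 ≤ k ∧
      ∀ u ∈ Set.Ico c 1, (1 - u ^ p) ^ (γ - 1) ≤ k * (1 - u) ^ (γ - 1) := by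
    rcases le_or_gt γ 1 with hγ1 | hγ1
    · set m : ℝ := p * min (c ^ (p - 1)) 1 with hm_def
      have hmpos : 0 < m :=
        mul_pos hp (lt_min (Real.rpow_pos_of_pos hc _) one_pos)
      have hmlb : ∀ u ∈ Set.Ioo c 1, m ≤ p * u ^ (p - 1) := by
        intro u hu
        have hu0 : 0 < u := hc.trans hu.1
        rcases le_total 1 p with h1p | hp1
        · have : c ^ (p - 1) ≤ u ^ (p - 1) :=
            Real.rpow_le_rpow hc.le hu.1.le (by linarith)
          exact mul_le_mul_of_nonneg_left (le_trans (min_le_left _ (1:ℝ)) this) hp.le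
        · have : (1:ℝ) ≤ u ^ (p - 1) :=
            Real.one_le_rpow_of_pos_of_le_one_of_nonpos hu0 hu.2.le (by linarith)
          exact mul_le_mul_of_nonneg_left (le_trans (min_le_right (c ^ (p-1)) _) this) hp.le
      refine ⟨m ^ (γ - 1), Real.rpow_nonneg hmpos.le _, fun u hu => ?_⟩
      have hu1 : 0 < 1 - u := by linarith [hu.2]
      have hlb := aux_lb hc hc1 hmlb u ⟨hu.1, hu.2.le⟩
      have hml : 0 < m * (1 - u) := mul_pos hmpos hu1
      calc (1 - u ^ p) ^ (γ - 1) ≤ (m * (1 - u)) ^ (γ - 1) :=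
            Real.rpow_le_rpow_of_nonpos hml hlb (by linarith)
        _ = m ^ (γ - 1) * (1 - u) ^ (γ - 1) := Real.mul_rpow hmpos.le hu1.le
    · set m : ℝ := p * max (c ^ (p - 1)) 1 with hm_def
      have hmub : ∀ u ∈ Set.Ioo c 1, p * u ^ (p - 1) ≤ m := by
        intro u hu
        have hu0 : 0 < u := hc.trans hu.1
        rcases le_total 1 p with h1p | hp1
        · have : u ^ (p - 1) ≤ 1 := Real.rpow_le_one hu0.le hu.2.le (by linarith)
          exact mul_le_mul_of_nonneg_left (le_trans this (le_max_right (c ^ (p-1)) _)) hp.le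
        · have : u ^ (p - 1) ≤ c ^ (p - 1) :=
            Real.rpow_le_rpow_of_nonpos hc hu.1.le (by linarith)
          exact mul_le_mul_of_nonneg_left (le_trans this (le_max_left _ (1:ℝ))) hp.le
      have hmpos : 0 < m := mul_pos hp (lt_max_of_lt_right one_pos)
      refine ⟨m ^ (γ - 1), Real.rpow_nonneg hmpos.le _, fun u hu => ?_⟩
      have hu0 : 0 < u := lt_of_lt_of_le hc hu.1
      have hu1 : 0 < 1 - u := by linarith [hu.2]
      have hub := aux_ub hc hc1 hmub u ⟨hu.1, hu.2.le⟩
      have h1up : 0 ≤ 1 - u ^ p := by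
        have : u ^ p ≤ 1 := Real.rpow_le_one hu0.le hu.2.le hp.le
        linarith
      calc (1 - u ^ p) ^ (γ - 1) ≤ (m * (1 - u)) ^ (γ - 1) :=
            Real.rpow_le_rpow h1up hub (by linarith)
        _ = m ^ (γ - 1) * (1 - u) ^ (γ - 1) := Real.mul_rpow hmpos.le hu1.le
  have hg : IntervalIntegrable (fun u : ℝ => k * (1 - u) ^ (γ - 1)) volume c 1 := by
    have h1 : IntervalIntegrable (fun x : ℝ => x ^ (γ - 1)) volume 0 (1 - c) :=
      intervalIntegral.intervalIntegrable_rpow' (by linarith)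
    have h2 := (h1.comp_sub_left 1).symm
    have h3 : IntervalIntegrable (fun x : ℝ => (1 - x) ^ (γ - 1)) volume c 1 := by
      simpa using h2
    exact h3.const_mul k
  apply hg.mono_fun
  · apply Measurable.aestronglyMeasurable
    fun_prop
  · have hne : ∀ᵐ u : ℝ ∂(volume.restrict (Set.uIoc c 1)), u ≠ 1 := by
      refine ae_restrict_of_ae ?_
      refine ae_iff.mpr ?_
      simpa using measure_singleton (1:ℝ)
    rw [uIoc_of_le hc1]
    have hmem : ∀ᵐ u : ℝ ∂(volume.restrict (Set.Ioc c 1)), u ∈ Set.Ioc c 1 :=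
      ae_restrict_mem measurableSet_Ioc
    rw [uIoc_of_le hc1] at hne
    filter_upwards [hne, hmem] with u hu1 humem
    have hu' : u ∈ Set.Ico c 1 := ⟨humem.1.le, lt_of_le_of_ne humem.2 hu1⟩
    have hu0 : 0 < u := lt_of_lt_of_le hc hu'.1
    have h1up : 0 ≤ 1 - u ^ p := by
      have : u ^ p ≤ 1 := Real.rpow_le_one hu0.le hu'.2.le hp.le
      linarith
    have hnn1 : 0 ≤ (1 - u ^ p) ^ (γ - 1) := Real.rpow_nonneg h1up _
    have hnn2 : 0 ≤ k * (1 - u) ^ (γ - 1) :=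
      mul_nonneg hk0 (Real.rpow_nonneg (by linarith [hu'.2]) _)
    simp only [Real.norm_eq_abs, abs_of_nonneg hnn1, abs_of_nonneg hnn2]
    exact hbound u hu'

/-- Integrability of the full inner integrand on `[c,1]`. -/
lemma aux_int2 {p γ β c : ℝ} (hp : 0 < p) (hγ : 0 < γ) (hc : 0 < c) (hc1 : c ≤ 1) :
    IntervalIntegrable (fun u : ℝ => (1 - u ^ p) ^ (γ - 1) * u ^ (-1 - β)) volume c 1 := by
  apply (aux_int1 hp hγ hc hc1).mul_continuousOn
  apply ContinuousOn.rpow_const continuousOn_id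
  intro x hx
  rw [uIcc_of_le hc1] at hx
  exact Or.inl (ne_of_gt (lt_of_lt_of_le hc hx.1))

/-- Integrability of the `v`-integrand. -/
lemma aux_jint {p a θ : ℝ} (hp : 0 < p) (ha : 0 < a) (hθ : 0 < θ) :
    IntegrableOn (fun v : ℝ => v ^ (a - 1) * Real.exp (-(v ^ p * θ ^ p))) (Ioi 0) := by
  have hb : 0 < θ ^ p := Real.rpow_pos_of_pos hθ p
  have base : IntegrableOn (fun y : ℝ => y ^ (a / p - 1) * Real.exp (-(θ ^ p) * y)) (Ioi 0) := by
    have h := integrableOn_rpow_mul_exp_neg_mul_rpow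
      (s := a / p - 1) (p := 1) (b := θ ^ p) (by have := div_pos ha hp; linarith) one_pos hb
    refine h.congr_fun (fun x hx => ?_) measurableSet_Ioi
    simp only [Real.rpow_one]
  have h2 := (integrableOn_Ioi_comp_rpow_iff'
    (fun y : ℝ => y ^ (a / p - 1) * Real.exp (-(θ ^ p) * y)) hp.ne').mpr base
  refine h2.congr_fun (fun x hx => ?_) measurableSet_Ioi
  have hx0 : (0:ℝ) < x := hx
  simp only [smul_eq_mul]
  rw [← Real.rpow_mul hx0.le]
  rw [← mul_assoc, ← Real.rpow_add hx0]
  have e1 : p - 1 + p * (a / p - 1) = a - 1 := by field_simp; try ring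
  rw [e1]
  congr 2
  ring

/-- Value of the `v`-integral. -/
lemma aux_jval {p a θ : ℝ} (hp : 0 < p) (ha : 0 < a) (hθ : 0 < θ) :
    ∫ v in Ioi (0:ℝ), v ^ (a - 1) * Real.exp (-(v ^ p * θ ^ p)) =
      θ ^ (-a) * p⁻¹ * Real.Gamma (a / p) := by
  have hb : 0 < θ ^ p := Real.rpow_pos_of_pos hθ p
  have h := integral_rpow_mul_exp_neg_mul_rpow hp (show (-1:ℝ) < a - 1 by linarith) hb
  have heq : ∀ x ∈ Ioi (0:ℝ), x ^ (a - 1) * Real.exp (-(θ ^ p) * x ^ p)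
      = x ^ (a - 1) * Real.exp (-(x ^ p * θ ^ p)) := by
    intro x hx
    congr 2
    ring
  rw [setIntegral_congr_fun measurableSet_Ioi heq] at h
  rw [h]
  rw [show a - 1 + 1 = a by ring, ← Real.rpow_mul hθ.le,
    show p * (-a / p) = -a by field_simp; try ring, one_div]

theorem ibgm_normalization (p γ η β : ℝ) (hp : 0 < p) (hγ : 0 < γ) (hη : 1 < η)
    (hβ : β < p * γ) :
    (∫ v in Ioi (0:ℝ), v ^ (p * γ - β - 1) *
        ∫ θ in (1:ℝ)..η, θ ^ (p * γ - β - 1) * Real.exp (-(v ^ p * θ ^ p)) *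
          ∫ u in (1/θ)..(1:ℝ), (1 - u ^ p) ^ (γ - 1) * u ^ (-1 - β)) =
      p⁻¹ * Real.Gamma (γ - β / p) * Cstar β γ p η ∧
    (∫ v in Ioi (0:ℝ), fibgm β γ p η v) = 1 ∧
    ∀ v, 0 < v →
      fibgm β γ p η v = ∫ θ in (1:ℝ)..η, gg (p * γ - β) p (θ ^ p) v * msharp β γ p η θ := by
  have hη1 : (1:ℝ) ≤ η := hη.le
  have hη0 : (0:ℝ) < η := lt_trans one_pos hη
  have hc0 : (0:ℝ) < 1/η := by positivity
  have hc1 : (1:ℝ)/η ≤ 1 := by rw [div_le_one hη0]; exact hη1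
  set a : ℝ := p * γ - β with ha_def
  have ha : 0 < a := by simp only [ha_def]; linarith
  have hap : a / p = γ - β / p := by rw [ha_def]; field_simp; try ring
  have hΓpos : 0 < Real.Gamma (a / p) := Real.Gamma_pos_of_pos (div_pos ha hp)
  have hΓpos' : 0 < Real.Gamma (γ - β / p) := by rw [← hap]; exact hΓpos
  -- continuity of the inner integral as a function of θ
  have hH : IntervalIntegrable (fun u : ℝ => (1 - u ^ p) ^ (γ - 1) * u ^ (-1 - β))
      volume (1/η) 1 := aux_int2 hp hγ hc0 hc1
  have hHuIcc : IntegrableOn (fun u : ℝ => (1 - u ^ p) ^ (γ - 1) * u ^ (-1 - β))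
      (uIcc (1/η) 1) := (intervalIntegrable_iff' (h := enorm_ne_top)).mp hH
  have hprim : ContinuousOn
      (fun x : ℝ => ∫ u in x..(1:ℝ), (1 - u ^ p) ^ (γ - 1) * u ^ (-1 - β))
      (uIcc (1/η) 1) := intervalIntegral.continuousOn_primitive_interval_left hHuIcc
  have hmaps : MapsTo (fun θ : ℝ => 1/θ) (Icc 1 η) (uIcc (1/η) 1) := by
    rw [uIcc_of_le hc1]
    intro θ hθ
    have hθ0 : 0 < θ := lt_of_lt_of_le one_pos hθ.1
    refine ⟨one_div_le_one_div_of_le hθ0 hθ.2, ?_⟩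
    rw [div_le_one hθ0]; exact hθ.1
  have hIcont : ContinuousOn (fun θ : ℝ => ∫ u in (1/θ)..(1:ℝ),
      (1 - u ^ p) ^ (γ - 1) * u ^ (-1 - β)) (Icc 1 η) := by
    have hinv : ContinuousOn (fun θ : ℝ => 1/θ) (Icc 1 η) := by
      apply ContinuousOn.div continuousOn_const continuousOn_id
      intro θ hθ; exact ne_of_gt (lt_of_lt_of_le one_pos hθ.1)
    exact hprim.comp hinv hmaps
  -- nonnegativity of the inner integral
  have hInonneg : ∀ θ : ℝ, 1 ≤ θ →
      0 ≤ ∫ u in (1/θ)..(1:ℝ), (1 - u ^ p) ^ (γ - 1) * u ^ (-1 - β) := by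
    intro θ hθ
    have hθ0 : 0 < θ := lt_of_lt_of_le one_pos hθ
    apply intervalIntegral.integral_nonneg (by rw [div_le_one hθ0]; exact hθ)
    intro u hu
    have hu0 : 0 < u := lt_of_lt_of_le (by positivity) hu.1
    have : u ^ p ≤ 1 := Real.rpow_le_one hu0.le hu.2 hp.le
    exact mul_nonneg (Real.rpow_nonneg (by linarith) _) (Real.rpow_nonneg hu0.le _)
  -- value of the inner v-integral
  have hkey : ∀ θ ∈ Ioc (1:ℝ) η,
      (∫ v in Ioi (0:ℝ), v ^ (a - 1) * (θ ^ (a - 1) * Real.exp (-(v ^ p * θ ^ p)) *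
          ∫ u in (1/θ)..(1:ℝ), (1 - u ^ p) ^ (γ - 1) * u ^ (-1 - β)))
        = p⁻¹ * Real.Gamma (a / p) * (θ⁻¹ * ∫ u in (1/θ)..(1:ℝ),
            (1 - u ^ p) ^ (γ - 1) * u ^ (-1 - β)) := by
    intro θ hθ
    have hθ0 : 0 < θ := lt_trans one_pos hθ.1
    set I : ℝ := ∫ u in (1/θ)..(1:ℝ), (1 - u ^ p) ^ (γ - 1) * u ^ (-1 - β) with hI
    have step1 : (∫ v in Ioi (0:ℝ), v ^ (a-1) * (θ ^ (a-1) * Real.exp (-(v^p * θ^p)) * I))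
        = (θ ^ (a-1) * I) * ∫ v in Ioi (0:ℝ), v ^ (a-1) * Real.exp (-(v^p * θ^p)) := by
      rw [← integral_const_mul]
      refine setIntegral_congr_fun measurableSet_Ioi (fun v hv => ?_)
      ring
    rw [step1, aux_jval hp ha hθ0]
    have h2 : θ ^ (a-1) * θ ^ (-a) = θ⁻¹ := by
      rw [← Real.rpow_add hθ0, show a - 1 + -a = -1 by ring, Real.rpow_neg_one]
    linear_combination (I * p⁻¹ * Real.Gamma (a/p)) * h2
  -- measurability on the product
  have hmeas : AEStronglyMeasurable
      (Function.uncurry fun v θ : ℝ => v ^ (a-1) * (θ ^ (a-1) * Real.exp (-(v^p * θ^p)) *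
        ∫ u in (1/θ)..(1:ℝ), (1 - u ^ p) ^ (γ - 1) * u ^ (-1 - β)))
      ((volume.restrict (Ioi 0)).prod (volume.restrict (Ioc 1 η))) := by
    have hm1 : AEStronglyMeasurable (fun z : ℝ × ℝ => z.1 ^ (a-1) * (z.2 ^ (a-1) *
        Real.exp (-(z.1 ^ p * z.2 ^ p))))
        ((volume.restrict (Ioi 0)).prod (volume.restrict (Ioc 1 η))) := by
      apply Measurable.aestronglyMeasurable
      fun_prop
    have hm2 : AEStronglyMeasurable (fun z : ℝ × ℝ => ∫ u in (1/z.2)..(1:ℝ),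
        (1 - u ^ p) ^ (γ - 1) * u ^ (-1 - β))
        ((volume.restrict (Ioi 0)).prod (volume.restrict (Ioc 1 η))) :=
      AEStronglyMeasurable.comp_snd
        ((hIcont.mono Ioc_subset_Icc_self).aestronglyMeasurable measurableSet_Ioc)
    refine (hm1.mul hm2).congr (Filter.Eventually.of_forall fun z => ?_)
    simp only [Function.uncurry, Pi.mul_apply]
    ring
  -- integrability on the product
  have hint : Integrable
      (Function.uncurry fun v θ : ℝ => v ^ (a-1) * (θ ^ (a-1) * Real.exp (-(v^p * θ^p)) *
        ∫ u in (1/θ)..(1:ℝ), (1 - u ^ p) ^ (γ - 1) * u ^ (-1 - β)))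
      ((volume.restrict (Ioi 0)).prod (volume.restrict (Ioc 1 η))) := by
    rw [integrable_prod_iff' hmeas]
    constructor
    · filter_upwards [ae_restrict_mem measurableSet_Ioc] with θ hθ
      have hθ0 : 0 < θ := lt_trans one_pos hθ.1
      have h1 := (aux_jint hp ha hθ0).const_mul
        (θ ^ (a-1) * ∫ u in (1/θ)..(1:ℝ), (1 - u ^ p) ^ (γ - 1) * u ^ (-1 - β))
      refine h1.congr (Filter.Eventually.of_forall fun v => ?_)
      simp only [Function.uncurry_apply_pair]
      ring
    · have hcont2 : ContinuousOn (fun θ : ℝ => p⁻¹ * Real.Gamma (a/p) * (θ⁻¹ *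
          ∫ u in (1/θ)..(1:ℝ), (1 - u ^ p) ^ (γ - 1) * u ^ (-1 - β))) (Icc 1 η) := by
        apply ContinuousOn.mul continuousOn_const
        apply ContinuousOn.mul _ hIcont
        apply ContinuousOn.inv₀ continuousOn_id
        intro θ hθ; exact ne_of_gt (lt_of_lt_of_le one_pos hθ.1)
      have hintOn : IntegrableOn (fun θ : ℝ => p⁻¹ * Real.Gamma (a/p) * (θ⁻¹ *
          ∫ u in (1/θ)..(1:ℝ), (1 - u ^ p) ^ (γ - 1) * u ^ (-1 - β))) (Ioc 1 η) :=
        (hcont2.integrableOn_Icc).mono_set Ioc_subset_Icc_self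
      refine hintOn.congr ?_
      filter_upwards [ae_restrict_mem measurableSet_Ioc] with θ hθ
      have hθ0 : 0 < θ := lt_trans one_pos hθ.1
      have hnorm : (∫ v in Ioi (0:ℝ), ‖v ^ (a-1) * (θ ^ (a-1) * Real.exp (-(v^p * θ^p)) *
          ∫ u in (1/θ)..(1:ℝ), (1 - u ^ p) ^ (γ - 1) * u ^ (-1 - β))‖)
          = ∫ v in Ioi (0:ℝ), v ^ (a-1) * (θ ^ (a-1) * Real.exp (-(v^p * θ^p)) *
          ∫ u in (1/θ)..(1:ℝ), (1 - u ^ p) ^ (γ - 1) * u ^ (-1 - β)) := by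
        refine setIntegral_congr_fun measurableSet_Ioi (fun v hv => ?_)
        rw [Real.norm_eq_abs, abs_of_nonneg]
        apply mul_nonneg (Real.rpow_nonneg (le_of_lt hv) _)
        exact mul_nonneg (mul_nonneg (Real.rpow_nonneg hθ0.le _) (Real.exp_pos _).le)
          (hInonneg θ hθ.1.le)
      simp only [Function.uncurry_apply_pair]
      rw [hnorm, hkey θ hθ]
  -- Part 1
  have hpart1 : (∫ v in Ioi (0:ℝ), v ^ (a - 1) *
      ∫ θ in (1:ℝ)..η, θ ^ (a - 1) * Real.exp (-(v ^ p * θ ^ p)) *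
        ∫ u in (1/θ)..(1:ℝ), (1 - u ^ p) ^ (γ - 1) * u ^ (-1 - β))
      = p⁻¹ * Real.Gamma (γ - β / p) * Cstar β γ p η := by
    calc (∫ v in Ioi (0:ℝ), v ^ (a - 1) *
        ∫ θ in (1:ℝ)..η, θ ^ (a - 1) * Real.exp (-(v ^ p * θ ^ p)) *
          ∫ u in (1/θ)..(1:ℝ), (1 - u ^ p) ^ (γ - 1) * u ^ (-1 - β))
        = ∫ v in Ioi (0:ℝ), ∫ θ in Ioc (1:ℝ) η, v ^ (a-1) * (θ ^ (a-1) *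
            Real.exp (-(v^p * θ^p)) *
            ∫ u in (1/θ)..(1:ℝ), (1 - u ^ p) ^ (γ - 1) * u ^ (-1 - β)) := by
          refine setIntegral_congr_fun measurableSet_Ioi (fun v hv => ?_)
          rw [intervalIntegral.integral_of_le hη1, ← integral_const_mul]
      _ = ∫ θ in Ioc (1:ℝ) η, ∫ v in Ioi (0:ℝ), v ^ (a-1) * (θ ^ (a-1) *
            Real.exp (-(v^p * θ^p)) *
            ∫ u in (1/θ)..(1:ℝ), (1 - u ^ p) ^ (γ - 1) * u ^ (-1 - β)) :=
          integral_integral_swap hint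
      _ = ∫ θ in Ioc (1:ℝ) η, p⁻¹ * Real.Gamma (a/p) * (θ⁻¹ *
            ∫ u in (1/θ)..(1:ℝ), (1 - u ^ p) ^ (γ - 1) * u ^ (-1 - β)) :=
          setIntegral_congr_fun measurableSet_Ioc hkey
      _ = p⁻¹ * Real.Gamma (a/p) * ∫ θ in Ioc (1:ℝ) η, θ⁻¹ *
            ∫ u in (1/θ)..(1:ℝ), (1 - u ^ p) ^ (γ - 1) * u ^ (-1 - β) :=
          integral_const_mul _ _
      _ = p⁻¹ * Real.Gamma (γ - β / p) * Cstar β γ p η := by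
          rw [hap]
          simp only [Cstar]
          rw [intervalIntegral.integral_of_le hη1]
  -- positivity of Cstar
  have hIpos : ∀ θ : ℝ, θ ∈ Ioo (1:ℝ) η →
      0 < ∫ u in (1/θ)..(1:ℝ), (1 - u ^ p) ^ (γ - 1) * u ^ (-1 - β) := by
    intro θ hθ
    have hθ0 : 0 < θ := lt_trans one_pos hθ.1
    have hc0' : 0 < 1/θ := by positivity
    have hc1' : 1/θ < 1 := by rw [div_lt_one hθ0]; exact hθ.1
    apply intervalIntegral.intervalIntegral_pos_of_pos_on (aux_int2 hp hγ hc0' hc1'.le)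
    · intro u hu
      have hu0 : 0 < u := lt_trans hc0' hu.1
      have : u ^ p < 1 := Real.rpow_lt_one hu0.le hu.2 hp
      exact mul_pos (Real.rpow_pos_of_pos (by linarith) _) (Real.rpow_pos_of_pos hu0 _)
    · exact hc1'
  have hCstar : 0 < Cstar β γ p η := by
    simp only [Cstar]
    apply intervalIntegral.intervalIntegral_pos_of_pos_on
    · apply ContinuousOn.intervalIntegrable
      rw [uIcc_of_le hη1]
      refine ContinuousOn.mul ?_ hIcont
      apply ContinuousOn.inv₀ continuousOn_id
      intro θ hθ; exact ne_of_gt (lt_of_lt_of_le one_pos hθ.1)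
    · intro θ hθ
      exact mul_pos (inv_pos.mpr (lt_trans one_pos hθ.1)) (hIpos θ hθ)
    · exact hη
  have hCc : Cc β γ p η ≠ 0 := by
    have h : 0 < Cc β γ p η := by
      simp only [Cc]
      positivity
    exact h.ne'
  refine ⟨hpart1, ?_, ?_⟩
  · -- Part 2
    have heq : ∀ v : ℝ, fibgm β γ p η v = (Cc β γ p η)⁻¹ * (v ^ (a-1) *
        ∫ θ in (1:ℝ)..η, θ ^ (a-1) * Real.exp (-(v^p * θ^p)) *
          ∫ u in (1/θ)..(1:ℝ), (1 - u ^ p) ^ (γ - 1) * u ^ (-1 - β)) := by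
      intro v
      simp only [fibgm]
      rw [← ha_def, mul_assoc]
    calc (∫ v in Ioi (0:ℝ), fibgm β γ p η v)
        = ∫ v in Ioi (0:ℝ), (Cc β γ p η)⁻¹ * (v ^ (a-1) *
            ∫ θ in (1:ℝ)..η, θ ^ (a-1) * Real.exp (-(v^p * θ^p)) *
              ∫ u in (1/θ)..(1:ℝ), (1 - u ^ p) ^ (γ - 1) * u ^ (-1 - β)) := by
          exact setIntegral_congr_fun measurableSet_Ioi (fun v _ => heq v)
      _ = (Cc β γ p η)⁻¹ * ∫ v in Ioi (0:ℝ), v ^ (a-1) *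
            ∫ θ in (1:ℝ)..η, θ ^ (a-1) * Real.exp (-(v^p * θ^p)) *
              ∫ u in (1/θ)..(1:ℝ), (1 - u ^ p) ^ (γ - 1) * u ^ (-1 - β) :=
          integral_const_mul _ _
      _ = (Cc β γ p η)⁻¹ * Cc β γ p η := by rw [hpart1]; rfl
      _ = 1 := inv_mul_cancel₀ hCc
  · -- Part 3
    intro v hv
    have hΓne : Real.Gamma (γ - β / p) ≠ 0 := hΓpos'.ne'
    have hCne : Cstar β γ p η ≠ 0 := hCstar.ne'
    have hcongr : ∀ θ ∈ uIcc (1:ℝ) η, gg a p (θ^p) v * msharp β γ p η θ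
        = (p * (Real.Gamma (γ - β/p))⁻¹ * (Cstar β γ p η)⁻¹ * v ^ (a-1)) *
          (θ ^ (a-1) * Real.exp (-(v^p * θ^p)) *
            ∫ u in (1/θ)..(1:ℝ), (1 - u ^ p) ^ (γ - 1) * u ^ (-1 - β)) := by
      intro θ hθ
      rw [uIcc_of_le hη1] at hθ
      have hθ0 : 0 < θ := lt_of_lt_of_le one_pos hθ.1
      simp only [gg, msharp]
      rw [hap]
      have hX : (θ^p) ^ (γ - β/p) = θ ^ (a-1) * θ := by
        rw [← hap, ← Real.rpow_mul hθ0.le, show p * (a/p) = a - 1 + 1 by field_simp; try ring,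
          Real.rpow_add hθ0, Real.rpow_one]
      rw [hX]
      linear_combination (p * (Real.Gamma (γ - β/p))⁻¹ * (Cstar β γ p η)⁻¹ * v ^ (a-1) *
        θ ^ (a-1) * Real.exp (-(v^p * θ^p)) *
        (∫ u in (1/θ)..(1:ℝ), (1 - u ^ p) ^ (γ - 1) * u ^ (-1 - β))) *
        (mul_inv_cancel₀ hθ0.ne')
    have hR : (∫ θ in (1:ℝ)..η, gg a p (θ^p) v * msharp β γ p η θ)
        = (p * (Real.Gamma (γ - β/p))⁻¹ * (Cstar β γ p η)⁻¹ * v ^ (a-1)) *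
          ∫ θ in (1:ℝ)..η, θ ^ (a-1) * Real.exp (-(v^p * θ^p)) *
            ∫ u in (1/θ)..(1:ℝ), (1 - u ^ p) ^ (γ - 1) * u ^ (-1 - β) := by
      rw [intervalIntegral.integral_congr hcongr, intervalIntegral.integral_const_mul]
    rw [hR]
    simp only [fibgm]
    rw [← ha_def]
    have hCcinv : (Cc β γ p η)⁻¹ = p * (Real.Gamma (γ - β/p))⁻¹ * (Cstar β γ p η)⁻¹ := by
      simp only [Cc]
      rw [mul_inv, mul_inv, inv_inv]
    rw [hCcinv]
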